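/- Let V and E be finite types with DecidableEq E, let s, t : E → V encode a finite multigraph G, and fix an edge e₀ ∈ E. Define the subdivided multigraph G' with vertex type V' = V ⊕ Unit and edge type E' = E ⊕ Unit, where s'(inl e) = inl (s e), t'(inl e) = inr () if e = e₀ and t'(inl e) = inl (t e) otherwise, and where the new edge inr () has s'(inr ()) = inr () and t'(inr ()) = inl (t e₀). Then the linear map from the space of harmonic 1-forms on G' to the space of harmonic 1-forms on G given by ω' ↦ (e ↦ ω'(inl e)) is a linear isomorphism of real vector spaces; its inverse assigns to a harmonic form ω on G the form on G' taking the value ω e on inl e and the value ω e₀ on the new edge inr (). -/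
import Mathlib


open Finset

/-- The space of harmonic 1-forms on the finite multigraph encoded by `s t : E → V`:
functions `ω : E → ℝ` such that at every vertex the sum of `ω` over outgoing edges
equals the sum over incoming edges. -/
def harmonicForms {V E : Type*} [Fintype E] [DecidableEq V] (s t : E → V) :
    Submodule ℝ (E → ℝ) where
  carrier := {ω | ∀ v : V, ∑ e ∈ univ.filter (fun e => s e = v), ω e =
      ∑ e ∈ univ.filter (fun e => t e = v), ω e}
  add_mem' := by
    intro a b ha hb v
    simp only [Set.mem_setOf_eq] at *
    simp only [Pi.add_apply, Finset.sum_add_distrib, ha v, hb v]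
  zero_mem' := by
    intro v
    simp
  smul_mem' := by
    intro c a ha v
    simp only [Set.mem_setOf_eq] at *
    simp only [Pi.smul_apply, smul_eq_mul, ← Finset.mul_sum, ha v]

/-- The start-vertex map of the multigraph obtained by subdividing the edge `e₀`:
the old edge `e` keeps its start vertex, and the new edge starts at the new vertex. -/
def subdivS {V E : Type*} (s : E → V) : E ⊕ Unit → V ⊕ Unit :=
  Sum.elim (fun e => Sum.inl (s e)) (fun _ => Sum.inr ())

/-- The end-vertex map of the multigraph obtained by subdividing the edge `e₀`:
the edge `e₀` now ends at the new vertex `Sum.inr ()`, every other old edge keeps its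
end vertex, and the new edge ends at `t e₀`. -/
def subdivT {V E : Type*} [DecidableEq E] (t : E → V) (e₀ : E) : E ⊕ Unit → V ⊕ Unit :=
  Sum.elim (fun e => if e = e₀ then Sum.inr () else Sum.inl (t e)) (fun _ => Sum.inl (t e₀))


section aux
variable {V E : Type*} [Fintype V] [Fintype E] [DecidableEq V] [DecidableEq E]
  (s t : E → V) (e₀ : E)

lemma sum_split (f : E → ℝ) (P : E → Prop) [DecidablePred P] :
    ∑ e, (if P e then f e else 0) =
      (∑ e, if e ≠ e₀ ∧ P e then f e else 0) + (if P e₀ then f e₀ else 0) := by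
  have : (if P e₀ then f e₀ else 0) = ∑ e, if e = e₀ ∧ P e then f e else 0 := by
    rw [Finset.sum_eq_single e₀]
    · simp
    · intro b _ hb; simp [hb]
    · simp
  rw [this, ← Finset.sum_add_distrib]
  apply Finset.sum_congr rfl
  intro e _
  by_cases h : e = e₀ <;> by_cases hp : P e <;> simp [h, hp]

lemma subdiv_sumS (ω' : E ⊕ Unit → ℝ) (v : V) :
    ∑ e ∈ univ.filter (fun e => subdivS s e = Sum.inl v), ω' e =
      ∑ e, if s e = v then ω' (Sum.inl e) else 0 := by
  rw [Finset.sum_filter, Fintype.sum_sum_type]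
  simp [subdivS]

lemma subdiv_sumT (ω' : E ⊕ Unit → ℝ) (v : V) :
    ∑ e ∈ univ.filter (fun e => subdivT t e₀ e = Sum.inl v), ω' e =
      (∑ e, if e ≠ e₀ ∧ t e = v then ω' (Sum.inl e) else 0) +
        (if t e₀ = v then ω' (Sum.inr ()) else 0) := by
  rw [Finset.sum_filter, Fintype.sum_sum_type]
  congr 1
  · apply Finset.sum_congr rfl
    intro e _
    by_cases h : e = e₀ <;> simp [subdivT, h]
  · simp [subdivT]

lemma subdiv_newval (ω' : E ⊕ Unit → ℝ)
    (h : ω' ∈ harmonicForms (subdivS s) (subdivT t e₀)) :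
    ω' (Sum.inr ()) = ω' (Sum.inl e₀) := by
  have := h (Sum.inr ())
  rw [Finset.sum_filter, Finset.sum_filter, Fintype.sum_sum_type,
    Fintype.sum_sum_type] at this
  simpa [subdivS, subdivT, Finset.sum_ite_eq', apply_ite] using this

lemma mem_restr (ω' : E ⊕ Unit → ℝ)
    (h : ω' ∈ harmonicForms (subdivS s) (subdivT t e₀)) :
    (fun e => ω' (Sum.inl e)) ∈ harmonicForms s t := by
  intro v
  have hv := h (Sum.inl v)
  rw [subdiv_sumS, subdiv_sumT] at hv
  rw [Finset.sum_filter, Finset.sum_filter, hv,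
    subdiv_newval s t e₀ ω' h, ← sum_split]

lemma mem_ext (ω : E → ℝ) (h : ω ∈ harmonicForms s t) :
    Sum.elim ω (fun _ => ω e₀) ∈ harmonicForms (subdivS s) (subdivT t e₀) := by
  intro v
  match v with
  | Sum.inl v =>
    rw [subdiv_sumS, subdiv_sumT]
    simp only [Sum.elim_inl, Sum.elim_inr]
    rw [← sum_split e₀ ω (fun e => t e = v)]
    have hv := h v
    rw [Finset.sum_filter, Finset.sum_filter] at hv
    exact hv
  | Sum.inr _ =>
    rw [Finset.sum_filter, Finset.sum_filter, Fintype.sum_sum_type,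
      Fintype.sum_sum_type]
    simp [subdivS, subdivT, Finset.sum_ite_eq', apply_ite]

def restrMap : harmonicForms (subdivS s) (subdivT t e₀) →ₗ[ℝ] harmonicForms s t where
  toFun ω' := ⟨fun e => (ω' : E ⊕ Unit → ℝ) (Sum.inl e), mem_restr s t e₀ _ ω'.2⟩
  map_add' _ _ := rfl
  map_smul' _ _ := rfl

def extMap : harmonicForms s t →ₗ[ℝ] harmonicForms (subdivS s) (subdivT t e₀) where
  toFun ω := ⟨Sum.elim (ω : E → ℝ) (fun _ => (ω : E → ℝ) e₀), mem_ext s t e₀ _ ω.2⟩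
  map_add' a b := by
    ext x
    match x with
    | Sum.inl e => rfl
    | Sum.inr _ => rfl
  map_smul' c a := by
    ext x
    match x with
    | Sum.inl e => rfl
    | Sum.inr _ => rfl

end aux

/-- **Subdivision invariance of harmonic 1-forms.** Subdividing the edge `e₀` of the
finite multigraph encoded by `s t : E → V` yields a multigraph whose space of harmonic
1-forms is linearly isomorphic to that of the original graph, via restriction to the
old edges; the inverse extends a form `ω` by the value `ω e₀` on the new edge. -/
theorem harmonicForms_subdivision_equiv {V E : Type*} [Fintype V] [Fintype E]
    [DecidableEq V] [DecidableEq E] (s t : E → V) (e₀ : E) :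
    ∃ φ : harmonicForms (subdivS s) (subdivT t e₀) ≃ₗ[ℝ] harmonicForms s t,
      (∀ ω', (φ ω' : E → ℝ) = fun e => (ω' : E ⊕ Unit → ℝ) (Sum.inl e)) ∧
      (∀ ω, (φ.symm ω : E ⊕ Unit → ℝ) =
        Sum.elim (ω : E → ℝ) (fun _ => (ω : E → ℝ) e₀)) := by
  refine ⟨LinearEquiv.ofLinear (restrMap s t e₀) (extMap s t e₀) ?_ ?_,
    fun _ => rfl, fun _ => rfl⟩
  · ext ω e; rfl
  · ext ω' x
    match x with
    | Sum.inl e => rfl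
    | Sum.inr _ => exact (subdiv_newval s t e₀ _ ω'.2).symm
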